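/- Let C be a cartesian category, G an internal group such that G* : C → [G, C] has a left adjoint Σ_G and the adjunction Σ_G ⊣ G* is stably Frobenius, and let X be an object of C. For an adjunction L ⊣ R : C/X ⇄ [G, C] over C (i.e. Σ_G ∘ L = Σ_X, where Σ_X : C/X → C is the domain functor), the following are equivalent: (1) L ⊣ R is stably Frobenius; (2) the sliced adjunction L_{G*X} ⊣ R_{G*X} satisfies Frobenius reciprocity; (3) the sliced adjunction L_{G*Z} ⊣ R_{G*Z} satisfies Frobenius reciprocity for every object Z of C. -/

import Mathlib

open CategoryTheory CategoryTheory.Limits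

universe v u v₂ u₂ v₃ u₃

attribute [local simp] prod.lift_fst prod.lift_snd prod.lift_fst_assoc prod.lift_snd_assoc

noncomputable section

namespace PrincipalBundles

variable {C : Type u} [Category.{v} C] [HasFiniteLimits C]

/-- An internal group in a cartesian category `C`: an object `G` with multiplication
`m : G ⨯ G ⟶ G`, unit `e : 1 ⟶ G` and inverse `i : G ⟶ G` satisfying the group axioms. -/
structure InternalGroup (C : Type u) [Category.{v} C] [HasFiniteLimits C] where
  G : C
  m : G ⨯ G ⟶ G
  e : ⊤_ C ⟶ G
  i : G ⟶ G
  mul_assoc' : (prod.associator G G G).inv ≫ prod.map m (𝟙 G) ≫ m = prod.map (𝟙 G) m ≫ m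
  one_mul' : prod.lift (terminal.from G ≫ e) (𝟙 G) ≫ m = 𝟙 G
  mul_one' : prod.lift (𝟙 G) (terminal.from G ≫ e) ≫ m = 𝟙 G
  inv_mul' : prod.lift i (𝟙 G) ≫ m = terminal.from G ≫ e
  mul_inv' : prod.lift (𝟙 G) i ≫ m = terminal.from G ≫ e

namespace InternalGroup

variable (Gr : InternalGroup C)

/-- Multiplication of generalized elements. -/
theorem one_mul_elt {T : C} (b : T ⟶ Gr.G) :
    prod.lift (terminal.from T ≫ Gr.e) b ≫ Gr.m = b := by
  have h : prod.lift (terminal.from T ≫ Gr.e) b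
      = b ≫ prod.lift (terminal.from Gr.G ≫ Gr.e) (𝟙 Gr.G) := by
    rw [prod.comp_lift, ← Category.assoc, terminal.comp_from, Category.comp_id]
  rw [h, Category.assoc, Gr.one_mul', Category.comp_id]

theorem mul_one_elt {T : C} (a : T ⟶ Gr.G) :
    prod.lift a (terminal.from T ≫ Gr.e) ≫ Gr.m = a := by
  have h : prod.lift a (terminal.from T ≫ Gr.e)
      = a ≫ prod.lift (𝟙 Gr.G) (terminal.from Gr.G ≫ Gr.e) := by
    rw [prod.comp_lift, ← Category.assoc, terminal.comp_from, Category.comp_id]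
  rw [h, Category.assoc, Gr.mul_one', Category.comp_id]

theorem mul_assoc_elt {T : C} (a b c : T ⟶ Gr.G) :
    prod.lift (prod.lift a b ≫ Gr.m) c ≫ Gr.m = prod.lift a (prod.lift b c ≫ Gr.m) ≫ Gr.m := by
  have h1 : prod.lift (prod.lift a b ≫ Gr.m) c
      = prod.lift (prod.lift a b) c ≫ prod.map Gr.m (𝟙 _) := by simp
  have h2 : prod.lift (prod.lift a b) c
      = prod.lift a (prod.lift b c) ≫ (prod.associator Gr.G Gr.G Gr.G).inv := by
    ext <;> simp
  have h3 : prod.lift a (prod.lift b c ≫ Gr.m)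
      = prod.lift a (prod.lift b c) ≫ prod.map (𝟙 _) Gr.m := by simp
  rw [h1, h2, h3, Category.assoc, Category.assoc, Gr.mul_assoc', ← Category.assoc]

theorem inv_mul_elt {T : C} (a : T ⟶ Gr.G) :
    prod.lift (a ≫ Gr.i) a ≫ Gr.m = terminal.from T ≫ Gr.e := by
  have h : prod.lift (a ≫ Gr.i) a = a ≫ prod.lift Gr.i (𝟙 Gr.G) := by
    rw [prod.comp_lift, Category.comp_id]
  rw [h, Category.assoc, Gr.inv_mul', ← Category.assoc, terminal.comp_from]

theorem mul_inv_elt {T : C} (a : T ⟶ Gr.G) :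
    prod.lift a (a ≫ Gr.i) ≫ Gr.m = terminal.from T ≫ Gr.e := by
  have h : prod.lift a (a ≫ Gr.i) = a ≫ prod.lift (𝟙 Gr.G) Gr.i := by
    rw [prod.comp_lift, Category.comp_id]
  rw [h, Category.assoc, Gr.mul_inv', ← Category.assoc, terminal.comp_from]

/-- The monad `X ↦ G ⨯ X` on `C` associated to an internal group `G`; its unit at `X` is
`(e ∘ !, id) : X ⟶ G ⨯ X` and its multiplication at `X` is `m ⨯ id : G ⨯ (G ⨯ X) ⟶ G ⨯ X`. -/
def actionMonad : Monad C where
  toFunctor := prod.functor.obj Gr.G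
  η :=
    { app := fun X => prod.lift (terminal.from X ≫ Gr.e) (𝟙 X)
      naturality := by
        intro X Y f
        dsimp [prod.functor]
        ext
        · simp [← Category.assoc, terminal.comp_from]
        · simp }
  μ :=
    { app := fun X => (prod.associator Gr.G Gr.G X).inv ≫ prod.map Gr.m (𝟙 X)
      naturality := by
        intro X Y f
        dsimp [prod.functor]
        ext
        · simp [prod.comp_lift_assoc]
        · simp }
  assoc := by
    intro X
    dsimp [prod.functor]
    ext
    · simp only [prod.comp_lift_assoc, Category.assoc, prod.map_fst, prod.map_snd,
        prod.lift_fst, prod.lift_snd, Category.comp_id, Category.id_comp,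
        prod.associator_inv, prod.lift_fst_assoc, prod.comp_lift, prod.map_fst_assoc,
        prod.map_snd_assoc, prod.lift_snd_assoc]
      exact (Gr.mul_assoc_elt _ _ _).symm
    · simp
  left_unit := by
    intro X
    dsimp [prod.functor]
    ext
    · simp [prod.comp_lift_assoc, Gr.one_mul_elt]
    · simp
  right_unit := by
    intro X
    dsimp [prod.functor]
    ext
    · simp only [prod.comp_lift_assoc, Category.assoc, prod.map_fst, prod.map_snd,
        prod.lift_fst, prod.lift_snd, Category.comp_id, Category.id_comp,
        prod.associator_inv, prod.lift_fst_assoc]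
      simp only [prod.map_snd_assoc, prod.lift_fst_assoc, Category.assoc, prod.lift_fst]
      rw [← Category.assoc prod.snd, terminal.comp_from]
      exact Gr.mul_one_elt prod.fst
    · simp

/-- The category `[G, C]` of `G`-objects and `G`-homomorphisms: objects of `C` equipped with
a `G`-action `a : G ⨯ A ⟶ A` satisfying the unit and associativity laws, with morphisms the
morphisms of `C` commuting with the actions.  (Implemented as the Eilenberg–Moore category of
the monad `G ⨯ (-)`; the algebra axioms are literally the action axioms, and algebra morphisms
are literally the `G`-homomorphisms.) -/
abbrev GObject := (actionMonad Gr).Algebra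

instance : HasFiniteLimits (GObject Gr) :=
  ⟨fun _ _ _ => ⟨fun D => Monad.hasLimit_of_comp_forget_hasLimit D⟩⟩

variable {Gr}

/-- The action of a `G`-object, seen as a morphism `G ⨯ A ⟶ A` in `C`. -/
def act (A : GObject Gr) : Gr.G ⨯ A.A ⟶ A.A := A.a

/-- Elementwise unit law for an action. -/
theorem act_one_elt (A : GObject Gr) {T : C} (y : T ⟶ A.A) :
    prod.lift (terminal.from T ≫ Gr.e) y ≫ act A = y := by
  have h : prod.lift (terminal.from T ≫ Gr.e) y
      = y ≫ prod.lift (terminal.from A.A ≫ Gr.e) (𝟙 A.A) := by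
    rw [prod.comp_lift, ← Category.assoc, terminal.comp_from, Category.comp_id]
  have hu := A.unit
  dsimp [actionMonad] at hu
  rw [h, Category.assoc, act]
  erw [hu]
  rw [Category.comp_id]

/-- Elementwise associativity law for an action. -/
theorem act_assoc_elt (A : GObject Gr) {T : C} (a b : T ⟶ Gr.G) (y : T ⟶ A.A) :
    prod.lift (prod.lift a b ≫ Gr.m) y ≫ act A
      = prod.lift a (prod.lift b y ≫ act A) ≫ act A := by
  have ha : (prod.associator Gr.G Gr.G A.A).inv ≫ prod.map Gr.m (𝟙 A.A) ≫ A.a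
      = prod.map (𝟙 Gr.G) A.a ≫ A.a := by
    have ha0 := A.assoc
    dsimp [actionMonad, prod.functor] at ha0
    simp only [Category.assoc] at ha0
    exact ha0
  have h1 : prod.lift (prod.lift a b ≫ Gr.m) y
      = prod.lift (prod.lift a b) y ≫ prod.map Gr.m (𝟙 _) := by simp
  have h2 : prod.lift (prod.lift a b) y
      = prod.lift a (prod.lift b y) ≫ (prod.associator Gr.G Gr.G A.A).inv := by
    ext <;> simp
  have h3 : prod.lift a (prod.lift b y ≫ act A)
      = prod.lift a (prod.lift b y) ≫ prod.map (𝟙 _) (act A) := by simp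
  rw [h1, h2, h3, Category.assoc, Category.assoc, act, ha]
  exact (Category.assoc _ _ _).symm

variable (Gr)

/-- The functor `G* : C ⥤ [G, C]` equipping an object with the trivial action `π₂`. -/
def trivAction : C ⥤ GObject Gr where
  obj X :=
    { A := X
      a := prod.snd
      unit := by simp [actionMonad]; exact prod.lift_snd _ _
      assoc := by simp [actionMonad, prod.functor] }
  map f :=
    { f := f
      h := by simp [actionMonad, prod.functor] }
  map_id X := by ext; rfl
  map_comp f g := by ext; rfl

/-- The `G`-object `(G, m)`: `G` acting on itself by multiplication. -/
def selfAction : GObject Gr where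
  A := Gr.G
  a := Gr.m
  unit := Gr.one_mul'
  assoc := by
    have h := Gr.mul_assoc'
    dsimp [actionMonad, prod.functor]
    simpa [Category.assoc] using h

/-- The product of two `G`-objects: the product in `C` with the componentwise action. -/
def prodGObject (A B : GObject Gr) : GObject Gr where
  A := A.A ⨯ B.A
  a := prod.lift (prod.map (𝟙 Gr.G) prod.fst ≫ act A) (prod.map (𝟙 Gr.G) prod.snd ≫ act B)
  unit := by
    dsimp [actionMonad]
    apply Limits.prod.hom_ext
    · erw [Category.assoc, prod.lift_fst, prod.lift_map_assoc, Category.comp_id, Category.id_comp]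
      exact act_one_elt A (prod.fst : A.A ⨯ B.A ⟶ A.A)
    · erw [Category.assoc, prod.lift_snd, prod.lift_map_assoc, Category.comp_id, Category.id_comp]
      exact act_one_elt B (prod.snd : A.A ⨯ B.A ⟶ B.A)
  assoc := by
    dsimp [actionMonad, prod.functor]
    apply Limits.prod.hom_ext
    · simp only [prod.comp_lift_assoc, Category.assoc, prod.map_fst, prod.map_snd,
        prod.lift_fst, prod.lift_snd, Category.comp_id, Category.id_comp,
        prod.associator_inv, prod.lift_fst_assoc, prod.comp_lift, prod.map_fst_assoc,
        prod.map_snd_assoc, prod.lift_snd_assoc, prod.map_map_assoc, prod.map_map]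
      rw [prod.lift_map_assoc]
      have hR : prod.map (𝟙 Gr.G) (prod.map (𝟙 Gr.G) (prod.fst : A.A ⨯ B.A ⟶ A.A) ≫ act A) ≫
              act A
          = prod.lift (prod.fst : Gr.G ⨯ (Gr.G ⨯ (A.A ⨯ B.A)) ⟶ Gr.G)
              (prod.lift ((prod.snd : Gr.G ⨯ (Gr.G ⨯ (A.A ⨯ B.A)) ⟶ Gr.G ⨯ (A.A ⨯ B.A)) ≫
                  prod.fst)
                ((prod.snd ≫ prod.snd) ≫ prod.fst) ≫ act A) ≫
            act A := by
        congr 1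
        apply Limits.prod.hom_ext
        · simp
        · simp only [prod.map_snd, prod.lift_snd]
          rw [← Category.assoc]
          congr 1
          apply Limits.prod.hom_ext <;> simp
      rw [hR]
      exact act_assoc_elt A prod.fst (prod.snd ≫ prod.fst) ((prod.snd ≫ prod.snd) ≫ prod.fst)
    · simp only [prod.comp_lift_assoc, Category.assoc, prod.map_fst, prod.map_snd,
        prod.lift_fst, prod.lift_snd, Category.comp_id, Category.id_comp,
        prod.associator_inv, prod.lift_fst_assoc, prod.comp_lift, prod.map_fst_assoc,
        prod.map_snd_assoc, prod.lift_snd_assoc, prod.map_map_assoc, prod.map_map]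
      rw [prod.lift_map_assoc]
      have hR : prod.map (𝟙 Gr.G) (prod.map (𝟙 Gr.G) (prod.snd : A.A ⨯ B.A ⟶ B.A) ≫ act B) ≫
              act B
          = prod.lift (prod.fst : Gr.G ⨯ (Gr.G ⨯ (A.A ⨯ B.A)) ⟶ Gr.G)
              (prod.lift ((prod.snd : Gr.G ⨯ (Gr.G ⨯ (A.A ⨯ B.A)) ⟶ Gr.G ⨯ (A.A ⨯ B.A)) ≫
                  prod.fst)
                ((prod.snd ≫ prod.snd) ≫ prod.snd) ≫ act B) ≫
            act B := by
        congr 1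
        apply Limits.prod.hom_ext
        · simp
        · simp only [prod.map_snd, prod.lift_snd]
          rw [← Category.assoc]
          congr 1
          apply Limits.prod.hom_ext <;> simp
      rw [hR]
      exact act_assoc_elt B prod.fst (prod.snd ≫ prod.fst) ((prod.snd ≫ prod.snd) ≫ prod.snd)

variable {Gr}

/-- First projection of the product of `G`-objects. -/
def prodGFst (A B : GObject Gr) : prodGObject Gr A B ⟶ A where
  f := prod.fst
  h := by simp [prodGObject, actionMonad, prod.functor, act]

/-- Second projection of the product of `G`-objects. -/
def prodGSnd (A B : GObject Gr) : prodGObject Gr A B ⟶ B where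
  f := prod.snd
  h := by simp [prodGObject, actionMonad, prod.functor, act]

/-- Functoriality of the product of `G`-objects. -/
def prodGHom {A A' B B' : GObject Gr} (u : A ⟶ A') (v : B ⟶ B') :
    prodGObject Gr A B ⟶ prodGObject Gr A' B' where
  f := prod.map u.f v.f
  h := by
    have hu : prod.map (𝟙 Gr.G) u.f ≫ act A' = act A ≫ u.f := by
      have h0 := u.h; dsimp [actionMonad, prod.functor] at h0; exact h0
    have hv : prod.map (𝟙 Gr.G) v.f ≫ act B' = act B ≫ v.f := by
      have h0 := v.h; dsimp [actionMonad, prod.functor] at h0; exact h0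
    dsimp [prodGObject, actionMonad, prod.functor]
    apply Limits.prod.hom_ext
    · simp only [Category.assoc, prod.lift_fst, prod.map_fst, prod.lift_fst_assoc]
      rw [← Category.assoc, prod.map_map, Category.id_comp, prod.map_fst]
      rw [show prod.map (𝟙 Gr.G) (prod.fst ≫ u.f)
            = prod.map (𝟙 Gr.G) prod.fst ≫ prod.map (𝟙 Gr.G) u.f by
          rw [prod.map_map, Category.comp_id]]
      rw [Category.assoc, hu]
    · simp only [Category.assoc, prod.lift_snd, prod.map_snd, prod.lift_snd_assoc]
      rw [← Category.assoc, prod.map_map, Category.id_comp, prod.map_snd]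
      rw [show prod.map (𝟙 Gr.G) (prod.snd ≫ v.f)
            = prod.map (𝟙 Gr.G) prod.snd ≫ prod.map (𝟙 Gr.G) v.f by
          rw [prod.map_map, Category.comp_id]]
      rw [Category.assoc, hv]

variable (Gr)

/-- The functor `(P, p) ⨯ (-) : [G, C] ⥤ [G, C]`. -/
def prodGFunctor (P : GObject Gr) : GObject Gr ⥤ GObject Gr where
  obj A := prodGObject Gr P A
  map h := prodGHom (𝟙 P) h
  map_id A := by
    apply Monad.Algebra.Hom.ext
    show prod.map (𝟙 P : P ⟶ P).f (𝟙 A : A ⟶ A).f = (𝟙 (prodGObject Gr P A) : _ ⟶ _).f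
    rw [Monad.Algebra.id_f, Monad.Algebra.id_f, Monad.Algebra.id_f, prod.map_id_id]
    rfl
  map_comp f g := by
    apply Monad.Algebra.Hom.ext
    show prod.map (𝟙 P : P ⟶ P).f (f ≫ g).f = (prodGHom (𝟙 P) f ≫ prodGHom (𝟙 P) g).f
    rw [Monad.Algebra.comp_f, Monad.Algebra.comp_f]
    show prod.map (𝟙 P : P ⟶ P).f (f.f ≫ g.f)
        = prod.map (𝟙 P : P ⟶ P).f f.f ≫ prod.map (𝟙 P : P ⟶ P).f g.f
    rw [prod.map_map]
    rw [Monad.Algebra.id_f, Category.comp_id]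

end InternalGroup

open InternalGroup

section Frobenius

variable {D : Type u₂} [Category.{v₂} D] [HasFiniteLimits D]
variable {E : Type u₃} [Category.{v₃} E] [HasFiniteLimits E]

/-- The canonical Frobenius map `L(R X ⨯ W) ⟶ X ⨯ L W` of an adjunction `L ⊣ R`, namely
`(L π₁, L π₂)` followed by `ε_X ⨯ id` where `ε` is the counit. -/
def frobMap {L : D ⥤ E} {R : E ⥤ D} (adj : L ⊣ R) (W : D) (X : E) :
    L.obj (R.obj X ⨯ W) ⟶ X ⨯ L.obj W :=
  prod.lift (L.map prod.fst ≫ adj.counit.app X) (L.map prod.snd)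

/-- An adjunction `L ⊣ R` between cartesian categories satisfies Frobenius reciprocity if
all the canonical maps `L(R X ⨯ W) ⟶ X ⨯ L W` are isomorphisms. -/
def IsFrobenius {L : D ⥤ E} {R : E ⥤ D} (adj : L ⊣ R) : Prop :=
  ∀ (W : D) (X : E), IsIso (frobMap adj W X)

/-- The left adjoint of the adjunction `L ⊣ R` sliced at `X`, sending `g : W ⟶ R X`
to its adjoint transpose `L W ⟶ X`. -/
def slicedL {L : D ⥤ E} {R : E ⥤ D} (adj : L ⊣ R) (X : E) : Over (R.obj X) ⥤ Over X where
  obj W := Over.mk (L.map W.hom ≫ adj.counit.app X)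
  map {W W'} u :=
    Over.homMk (L.map u.left) (by
      dsimp
      rw [← Category.assoc, ← L.map_comp, Over.w u])
  map_id W := by ext; dsimp; simp
  map_comp f g := by ext; dsimp; simp

/-- The right adjoint of the adjunction `L ⊣ R` sliced at `X`, sending `f : Y ⟶ X` to
`R f : R Y ⟶ R X`. -/
def slicedR {L : D ⥤ E} {R : E ⥤ D} (adj : L ⊣ R) (X : E) : Over X ⥤ Over (R.obj X) where
  obj Y := Over.mk (R.map Y.hom)
  map {Y Y'} u :=
    Over.homMk (R.map u.left) (by
      dsimp
      rw [← R.map_comp, Over.w u])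
  map_id Y := by ext; dsimp; simp
  map_comp f g := by ext; dsimp; simp

/-- The sliced adjunction `L_X ⊣ R_X : D / R X ⇄ E / X` of `L ⊣ R` at an object `X`. -/
def slicedAdj {L : D ⥤ E} {R : E ⥤ D} (adj : L ⊣ R) (X : E) : slicedL adj X ⊣ slicedR adj X :=
  Adjunction.mkOfHomEquiv
    { homEquiv := fun W Y =>
        { toFun := fun u => Over.homMk ((adj.homEquiv _ _) u.left) (by
            have hu := Over.w u
            dsimp [slicedL] at hu
            dsimp [slicedR]
            erw [Adjunction.homEquiv_unit, Category.assoc, ← R.map_comp, hu, R.map_comp,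
              adj.unit_naturality_assoc, adj.right_triangle_components, Category.comp_id])
          invFun := fun v => Over.homMk ((adj.homEquiv _ _).symm v.left) (by
            have hv := Over.w v
            dsimp [slicedR] at hv
            dsimp [slicedL]
            erw [Adjunction.homEquiv_counit, Category.assoc, ← adj.counit_naturality,
              ← Category.assoc, ← L.map_comp, hv])
          left_inv := fun u => by ext; exact (adj.homEquiv _ _).left_inv u.left
          right_inv := fun v => by ext; exact (adj.homEquiv _ _).right_inv v.left }
      homEquiv_naturality_left_symm := by
        intro W' W Y f g
        ext
        exact adj.homEquiv_naturality_left_symm f.left g.left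
      homEquiv_naturality_right := by
        intro W Y Y' f g
        ext
        exact adj.homEquiv_naturality_right f.left g.left }

/-- An adjunction between cartesian categories is stably Frobenius if every sliced
adjunction satisfies Frobenius reciprocity. -/
def IsStablyFrobenius {L : D ⥤ E} {R : E ⥤ D} (adj : L ⊣ R) : Prop :=
  ∀ X : E, IsFrobenius (slicedAdj adj X)

end Frobenius

/-- A morphism `f : X ⟶ Y` is an effective descent morphism if the pullback functor
`f* : C/Y ⥤ C/X` is monadic. -/
def EffectiveDescentMorphism {X Y : C} (f : X ⟶ Y) : Prop :=
  Nonempty (MonadicRightAdjoint (Over.pullback f))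

/-- A principal `G`-bundle: a `G`-object `(P, p)` such that `! : P ⟶ 1` is an effective
descent morphism and `(p, π₂) : G ⨯ P ⟶ P ⨯ P` is an isomorphism. -/
def IsPrincipal (Gr : InternalGroup C) (P : InternalGroup.GObject Gr) : Prop :=
  EffectiveDescentMorphism (terminal.from P.A) ∧
    IsIso (prod.lift (InternalGroup.act P) prod.snd)

/-- The functor `C ⥤ C/P` sending `X` to the projection `P ⨯ X ⟶ P`. -/
def projFunctor (P : C) : C ⥤ Over P where
  obj X := Over.mk (prod.fst : P ⨯ X ⟶ P)
  map {X Y} f := Over.homMk (prod.map (𝟙 P) f) (by simp)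
  map_id X := by ext; dsimp; simp
  map_comp f g := by ext; dsimp; simp

theorem cofork_condition (Gr : InternalGroup C) (P : InternalGroup.GObject Gr) (X : C) :
    ((prod.associator Gr.G P.A X).inv ≫ prod.map (InternalGroup.act P) (𝟙 X)) ≫
        (prod.snd : P.A ⨯ X ⟶ X)
      = (prod.snd : Gr.G ⨯ (P.A ⨯ X) ⟶ P.A ⨯ X) ≫ prod.snd := by
  simp

/-- The object `G ⨯ X` of `C/X` underlying the internal group induced by `G` in `C/X`. -/
def overG (Gr : InternalGroup C) (X : C) : Over X := Over.mk (prod.snd : Gr.G ⨯ X ⟶ X)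

section OverGroup

variable {Gr : InternalGroup C} {X : C}

/-- The `G`-component of a morphism into `G ⨯ X` over `X`. -/
abbrev toG {A : Over X} (u : A ⟶ overG Gr X) : A.left ⟶ Gr.G := u.left ≫ prod.fst

theorem homGX_ext {A : Over X} {u v : A ⟶ overG Gr X} (h : toG u = toG v) : u = v := by
  ext
  apply Limits.prod.hom_ext
  · exact h
  · have hu := Over.w u
    have hv := Over.w v
    dsimp [overG] at hu hv
    rw [hu, hv]

theorem toG_comp {A B : Over X} (w : A ⟶ B) (u : B ⟶ overG Gr X) :
    toG (w ≫ u) = w.left ≫ toG u := by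
  dsimp [toG]
  exact Category.assoc _ _ _

variable (Gr X)

/-- The multiplication `m ⨯ id_X : (G ⨯ G) ⨯ X ⟶ G ⨯ X` of the induced group in `C/X`,
viewing `(G ⨯ X) ⨯_X (G ⨯ X) ≅ (G ⨯ G) ⨯ X`. -/
def overMul : overG Gr X ⨯ overG Gr X ⟶ overG Gr X :=
  Over.homMk
    (prod.lift
      (prod.lift (toG (prod.fst : overG Gr X ⨯ overG Gr X ⟶ overG Gr X))
        (toG (prod.snd : overG Gr X ⨯ overG Gr X ⟶ overG Gr X)) ≫ Gr.m)
      (overG Gr X ⨯ overG Gr X).hom)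
    (by simp [overG])

/-- The unit `(e ∘ !, id_X) : X ⟶ G ⨯ X` of the induced group in `C/X`. -/
def overOne : ⊤_ (Over X) ⟶ overG Gr X :=
  Over.homMk (prod.lift (terminal.from (⊤_ Over X).left ≫ Gr.e) (⊤_ Over X).hom)
    (by simp [overG])

/-- The inverse `i ⨯ id_X : G ⨯ X ⟶ G ⨯ X` of the induced group in `C/X`. -/
def overInv : overG Gr X ⟶ overG Gr X :=
  Over.homMk (prod.map Gr.i (𝟙 X)) (by simp [overG])

variable {Gr X}

theorem toG_overMul {A : Over X} (u : A ⟶ overG Gr X ⨯ overG Gr X) :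
    toG (u ≫ overMul Gr X)
      = prod.lift (toG (u ≫ prod.fst)) (toG (u ≫ prod.snd)) ≫ Gr.m := by
  rw [toG_comp]
  dsimp [overMul, toG]
  erw [prod.lift_fst, prod.comp_lift_assoc]
  erw [Category.assoc, Category.assoc]

theorem toG_overOne {A : Over X} (u : A ⟶ ⊤_ (Over X)) :
    toG (u ≫ overOne Gr X) = terminal.from A.left ≫ Gr.e := by
  rw [toG_comp]
  dsimp [overOne, toG]
  erw [prod.lift_fst, ← Category.assoc, terminal.comp_from]

end OverGroup

/-- The internal group `G ⨯ X` in the slice category `C/X` induced by an internal group `G`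
of `C`: its multiplication is induced by `m ⨯ id_X`, its unit by `(e ∘ !, id_X)` and its
inverse by `i ⨯ id_X`. -/
def inducedGroup (Gr : InternalGroup C) (X : C) : InternalGroup (Over X) where
  G := overG Gr X
  m := overMul Gr X
  e := overOne Gr X
  i := overInv Gr X
  one_mul' := by
    apply homGX_ext
    rw [toG_overMul, prod.lift_fst, prod.lift_snd, toG_overOne]
    simp only [toG, Over.id_left]
    erw [Category.id_comp]
    exact Gr.one_mul_elt (prod.fst : Gr.G ⨯ X ⟶ Gr.G)
  mul_one' := by
    apply homGX_ext
    rw [toG_overMul, prod.lift_fst, prod.lift_snd, toG_overOne]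
    simp only [toG, Over.id_left]
    erw [Category.id_comp]
    exact Gr.mul_one_elt (prod.fst : Gr.G ⨯ X ⟶ Gr.G)
  mul_assoc' := by
    apply homGX_ext
    have l1 : ((prod.associator (overG Gr X) (overG Gr X) (overG Gr X)).inv ≫
          prod.map (overMul Gr X) (𝟙 (overG Gr X))) ≫ prod.fst
        = prod.lift prod.fst (prod.snd ≫ prod.fst) ≫ overMul Gr X := by
      rw [Category.assoc, prod.map_fst, ← Category.assoc]
      congr 1
      simp
    have l2 : ((prod.associator (overG Gr X) (overG Gr X) (overG Gr X)).inv ≫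
          prod.map (overMul Gr X) (𝟙 (overG Gr X))) ≫ prod.snd
        = prod.snd ≫ prod.snd := by
      rw [Category.assoc, prod.map_snd, Category.comp_id]
      simp
    have l3 : prod.map (𝟙 (overG Gr X)) (overMul Gr X) ≫
          (prod.fst : overG Gr X ⨯ overG Gr X ⟶ overG Gr X) = prod.fst := by
      rw [prod.map_fst, Category.comp_id]
    have l4 : prod.map (𝟙 (overG Gr X)) (overMul Gr X) ≫
          (prod.snd : overG Gr X ⨯ overG Gr X ⟶ overG Gr X)
        = prod.snd ≫ overMul Gr X := by
      rw [prod.map_snd]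
    rw [← Category.assoc, toG_overMul, l1, l2, toG_overMul, prod.lift_fst, prod.lift_snd]
    rw [toG_overMul, l3, l4, toG_overMul]
    exact Gr.mul_assoc_elt _ _ _
  inv_mul' := by
    apply homGX_ext
    rw [toG_overMul, prod.lift_fst, prod.lift_snd, toG_overOne]
    have hi : toG (overInv Gr X) = prod.fst ≫ Gr.i := by
      dsimp [overInv, toG]
      exact prod.map_fst _ _
    rw [hi]
    simp only [toG, Over.id_left]
    erw [Category.id_comp]
    exact Gr.inv_mul_elt (prod.fst : Gr.G ⨯ X ⟶ Gr.G)
  mul_inv' := by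
    apply homGX_ext
    rw [toG_overMul, prod.lift_fst, prod.lift_snd, toG_overOne]
    have hi : toG (overInv Gr X) = prod.fst ≫ Gr.i := by
      dsimp [overInv, toG]
      exact prod.map_fst _ _
    rw [hi]
    simp only [toG, Over.id_left]
    erw [Category.id_comp]
    exact Gr.mul_inv_elt (prod.fst : Gr.G ⨯ X ⟶ Gr.G)

/-- A principal `G`-bundle over an object `X` of `C`: a `G`-object `(P, p)` with an
action-invariant morphism `f : P ⟶ X` which is an effective descent morphism and such that
`(p, π₂) : G ⨯ P ⟶ P ⨯_X P` is an isomorphism. -/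
structure PrincipalBundleOver (Gr : InternalGroup C) (X : C) where
  P : InternalGroup.GObject Gr
  f : P.A ⟶ X
  invariant : InternalGroup.act P ≫ f = prod.snd ≫ f
  descent : EffectiveDescentMorphism f
  torsor : IsIso (pullback.lift (InternalGroup.act P) prod.snd invariant)

namespace PrincipalBundleOver

variable {Gr : InternalGroup C} {X : C}

/-- A morphism of principal `G`-bundles over `X`: a `G`-homomorphism over `X`. -/
@[ext]
structure Hom (P Q : PrincipalBundleOver Gr X) where
  hom : P.P ⟶ Q.P
  w : hom.f ≫ Q.f = P.f

/-- The category of principal `G`-bundles over `X`. -/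
instance : Category (PrincipalBundleOver Gr X) where
  Hom P Q := Hom P Q
  id P := ⟨𝟙 P.P, by rw [Monad.Algebra.id_f]; simp⟩
  comp u v := ⟨u.hom ≫ v.hom, by rw [Monad.Algebra.comp_f, Category.assoc, v.w, u.w]⟩
  id_comp u := by apply Hom.ext; simp
  comp_id u := by apply Hom.ext; simp
  assoc u v w := by apply Hom.ext; simp

end PrincipalBundleOver

/-- The category of adjunctions `L ⊣ R : C ⇄ [G, C]` over `C` (i.e. `Σ_G ∘ L ≅ Id_C`)
satisfying Frobenius reciprocity; morphisms are natural transformations between the left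
adjoints. -/
structure FrobAdjObj (Gr : InternalGroup C) (SG : InternalGroup.GObject Gr ⥤ C) where
  L : C ⥤ InternalGroup.GObject Gr
  R : InternalGroup.GObject Gr ⥤ C
  adj : L ⊣ R
  isOver : Nonempty (L ⋙ SG ≅ 𝟭 C)
  frob : IsFrobenius adj

/-- A morphism of adjunctions over `C`: a natural transformation between the left adjoints. -/
@[ext]
structure FrobAdjHom {Gr : InternalGroup C} {SG : InternalGroup.GObject Gr ⥤ C}
    (A B : FrobAdjObj Gr SG) where
  nat : A.L ⟶ B.L

instance (Gr : InternalGroup C) (SG : InternalGroup.GObject Gr ⥤ C) :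
    Category (FrobAdjObj Gr SG) where
  Hom A B := FrobAdjHom A B
  id A := ⟨𝟙 A.L⟩
  comp u v := ⟨u.nat ≫ v.nat⟩
  id_comp u := by apply FrobAdjHom.ext; simp
  comp_id u := by apply FrobAdjHom.ext; simp
  assoc u v w := by apply FrobAdjHom.ext; simp

/-- The category of adjunctions `L ⊣ R : C/X ⇄ [G, C]` over `C` (i.e. `Σ_G ∘ L ≅ Σ_X`)
that are stably Frobenius; morphisms are natural transformations between the left adjoints. -/
structure StablyFrobAdjOver (Gr : InternalGroup C) (SG : InternalGroup.GObject Gr ⥤ C)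
    (X : C) where
  L : Over X ⥤ InternalGroup.GObject Gr
  R : InternalGroup.GObject Gr ⥤ Over X
  adj : L ⊣ R
  isOver : Nonempty (L ⋙ SG ≅ Over.forget X)
  frob : IsStablyFrobenius adj

/-- A morphism of adjunctions over `C`: a natural transformation between the left adjoints. -/
@[ext]
structure StablyFrobAdjHom {Gr : InternalGroup C} {SG : InternalGroup.GObject Gr ⥤ C} {X : C}
    (A B : StablyFrobAdjOver Gr SG X) where
  nat : A.L ⟶ B.L

instance (Gr : InternalGroup C) (SG : InternalGroup.GObject Gr ⥤ C) (X : C) :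
    Category (StablyFrobAdjOver Gr SG X) where
  Hom A B := StablyFrobAdjHom A B
  id A := ⟨𝟙 A.L⟩
  comp u v := ⟨u.nat ≫ v.nat⟩
  id_comp u := by apply StablyFrobAdjHom.ext; simp
  comp_id u := by apply StablyFrobAdjHom.ext; simp
  assoc u v w := by apply StablyFrobAdjHom.ext; simp

end PrincipalBundles

open PrincipalBundles PrincipalBundles.InternalGroup
open CategoryTheory CategoryTheory.Limits

namespace S18

attribute [local simp] pullback.lift_fst pullback.lift_snd pullback.lift_fst_assoc
  pullback.lift_snd_assoc

variable {𝒞 : Type u} [Category.{v} 𝒞]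

/-- A comparison morphism between two pullbacks of the same cospan is an isomorphism. -/
lemma isIso_of_isPullback_comparison {P Q X₁ X₂ B : 𝒞} {p₁ : P ⟶ X₁} {p₂ : P ⟶ X₂}
    {f : X₁ ⟶ B} {g : X₂ ⟶ B} (hp : IsPullback p₁ p₂ f g)
    {a : Q ⟶ X₁} {b : Q ⟶ X₂} (hq : IsPullback a b f g)
    (c : Q ⟶ P) (h₁ : c ≫ p₁ = a) (h₂ : c ≫ p₂ = b) : IsIso c := by
  obtain ⟨d, hd₁, hd₂⟩ : {l : P ⟶ Q // l ≫ a = p₁ ∧ l ≫ b = p₂} :=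
    PullbackCone.IsLimit.lift' hq.isLimit p₁ p₂ hp.w
  have hd₁' : d ≫ a = p₁ := hd₁
  have hd₂' : d ≫ b = p₂ := hd₂
  refine ⟨d, hq.hom_ext ?_ ?_, hp.hom_ext ?_ ?_⟩ <;>
    simp only [Category.assoc, Category.id_comp, hd₁', hd₂', h₁, h₂]

/-- Inverting a commuting square of isomorphisms. -/
lemma iso_square_inv {A B A' B' : 𝒞} {a : A ⟶ B} {b : A' ⟶ B'} (i : A ≅ A') (i' : B ≅ B')
    (hn : a ≫ i'.hom = i.hom ≫ b) : b ≫ i'.inv = i.inv ≫ a := by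
  rw [Iso.comp_inv_eq, Category.assoc, hn, Iso.inv_hom_id_assoc]

/-- Precomposing a pullback square with an isomorphism gives a pullback square. -/
lemma isPullback_of_iso_comp {P Q X₁ X₂ B : 𝒞} {p₁ : P ⟶ X₁} {p₂ : P ⟶ X₂}
    {f : X₁ ⟶ B} {g : X₂ ⟶ B} (hp : IsPullback p₁ p₂ f g)
    (c : Q ⟶ P) [IsIso c] : IsPullback (c ≫ p₁) (c ≫ p₂) f g := by
  refine hp.of_iso (asIso c).symm (Iso.refl _) (Iso.refl _) (Iso.refl _) ?_ ?_ ?_ ?_ <;> simp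

/-- The graph-style pullback: pulling back the second projection of a product along a
morphism from a terminal object. -/
lemma isPullback_lift_terminal [HasFiniteLimits 𝒞] {A B V : 𝒞} (ht : IsTerminal V) (δ : V ⟶ B) :
    IsPullback (prod.lift (𝟙 A) (ht.from A ≫ δ)) (ht.from A) (prod.snd : A ⨯ B ⟶ B) δ := by
  refine IsPullback.of_isLimit' ⟨by simp⟩ ?_
  refine PullbackCone.IsLimit.mk _ (fun s => s.fst ≫ prod.fst) ?_ ?_ ?_
  · intro s
    apply Limits.prod.hom_ext
    · simp
    · have hV : (s.fst ≫ prod.fst) ≫ ht.from A = s.snd := ht.hom_ext _ _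
      simp only [Category.assoc, prod.lift_snd]
      calc s.fst ≫ prod.fst ≫ ht.from A ≫ δ
          = ((s.fst ≫ prod.fst) ≫ ht.from A) ≫ δ := by simp only [Category.assoc]
        _ = s.snd ≫ δ := by rw [hV]
        _ = s.fst ≫ prod.snd := s.condition.symm
  · intro s
    exact ht.hom_ext _ _
  · intro s m hm₁ _
    show m = s.fst ≫ prod.fst
    rw [← hm₁]; simp

/-- If a square with a product projection as one side is a pullback, the apex is
the evident product. -/
lemma isIso_lift_of_isPullback_prod_snd [HasFiniteLimits 𝒞] {Q Y B P : 𝒞}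
    {t : Q ⟶ Y ⨯ B} {b : Q ⟶ P} {p : P ⟶ B}
    (h : IsPullback t b (prod.snd : Y ⨯ B ⟶ B) p) : IsIso (prod.lift (t ≫ prod.fst) b) := by
  obtain ⟨u, hu₁, hu₂⟩ : {l : Y ⨯ P ⟶ Q // l ≫ t = prod.map (𝟙 Y) p ∧ l ≫ b = prod.snd} :=
    PullbackCone.IsLimit.lift' h.isLimit
    (prod.map (𝟙 Y) p) (prod.snd : Y ⨯ P ⟶ P) (by simp)
  have hu₁' : u ≫ t = prod.map (𝟙 Y) p := hu₁
  have hu₂' : u ≫ b = prod.snd := hu₂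
  refine ⟨u, ?_, ?_⟩
  · refine h.hom_ext ?_ ?_
    · rw [Category.assoc, hu₁', Category.id_comp]
      apply Limits.prod.hom_ext
      · simp
      · simp only [Category.assoc, prod.map_snd, prod.lift_snd_assoc, Category.id_comp]
        rw [← h.w]
    · rw [Category.assoc, hu₂']; simp
  · apply Limits.prod.hom_ext
    · simp only [Category.assoc, prod.lift_fst, Category.id_comp]
      rw [← Category.assoc, hu₁']; simp
    · simp only [Category.assoc, prod.lift_snd, Category.id_comp]
      exact hu₂'

/-- Product-projection squares are pullbacks. -/
lemma isPullback_prod_fst [HasFiniteLimits 𝒞] {Y Z P : 𝒞} (f : Y ⟶ Z) :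
    IsPullback (prod.fst : Y ⨯ P ⟶ Y) (prod.map f (𝟙 P)) f (prod.fst : Z ⨯ P ⟶ Z) := by
  refine IsPullback.of_isLimit' ⟨by simp⟩ ?_
  refine PullbackCone.IsLimit.mk _ (fun s => prod.lift s.fst (s.snd ≫ prod.snd)) ?_ ?_ ?_
  · intro s; simp
  · intro s
    apply Limits.prod.hom_ext
    · simpa using s.condition
    · simp
  · intro s m hm₁ hm₂
    show m = prod.lift s.fst (s.snd ≫ prod.snd)
    apply Limits.prod.hom_ext
    · simpa using hm₁
    · rw [← hm₂]; simp

/-- The binary product in an over category, seen as a pullback in the base. -/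
lemma isPullback_over_prod [HasFiniteLimits 𝒞] {B : 𝒞} (f g : Over B) :
    IsPullback ((prod.fst : f ⨯ g ⟶ f).left) ((prod.snd : f ⨯ g ⟶ g).left) f.hom g.hom := by
  have hw : (prod.fst : f ⨯ g ⟶ f).left ≫ f.hom = (prod.snd : f ⨯ g ⟶ g).left ≫ g.hom := by
    rw [Over.w, Over.w]
  refine IsPullback.of_isLimit' ⟨hw⟩ ?_
  refine PullbackCone.IsLimit.mk _
    (fun s => (prod.lift (Over.homMk s.fst rfl : Over.mk (s.fst ≫ f.hom) ⟶ f)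
      (Over.homMk s.snd s.condition.symm : Over.mk (s.fst ≫ f.hom) ⟶ g)).left) ?_ ?_ ?_
  · intro s
    rw [← Over.comp_left, prod.lift_fst]; rfl
  · intro s
    rw [← Over.comp_left, prod.lift_snd]; rfl
  · intro s m hm₁ hm₂
    have hm : m ≫ (f ⨯ g).hom = s.fst ≫ f.hom := by
      rw [← Over.w (prod.fst : f ⨯ g ⟶ f), ← Category.assoc, hm₁]
    have hh : (Over.homMk m hm : Over.mk (s.fst ≫ f.hom) ⟶ f ⨯ g) =
        prod.lift (Over.homMk s.fst rfl) (Over.homMk s.snd s.condition.symm) := by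
      apply Limits.prod.hom_ext
      · rw [prod.lift_fst]
        ext
        simp only [Over.comp_left, Over.homMk_left]
        exact hm₁
      · rw [prod.lift_snd]
        ext
        simp only [Over.comp_left, Over.homMk_left]
        exact hm₂
    show m = (prod.lift (Over.homMk s.fst rfl : Over.mk (s.fst ≫ f.hom) ⟶ f)
      (Over.homMk s.snd s.condition.symm : Over.mk (s.fst ≫ f.hom) ⟶ g)).left
    calc m = (Over.homMk m hm : Over.mk (s.fst ≫ f.hom) ⟶ f ⨯ g).left := rfl
    _ = _ := by rw [hh]

/-- Pulling back a pullback square sitting over `Z` along `q : P' ⟶ Z` yields a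
pullback square. -/
lemma isPullback_map_pullback [HasPullbacks 𝒞] {S S₁ S₂ S₃ Z P' : 𝒞}
    {f : S ⟶ S₁} {g : S ⟶ S₂} {m : S₁ ⟶ S₃} {w : S₂ ⟶ S₃} (hq : IsPullback f g m w)
    {a : S ⟶ Z} {a₁ : S₁ ⟶ Z} {a₂ : S₂ ⟶ Z} {a₃ : S₃ ⟶ Z}
    (h₁ : f ≫ a₁ = a) (h₂ : g ≫ a₂ = a) (h₃ : m ≫ a₃ = a₁) (h₄ : w ≫ a₃ = a₂)
    (q : P' ⟶ Z) :
    IsPullback (pullback.map a q a₁ q f (𝟙 _) (𝟙 _) (by simp [← h₁]) (by simp))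
      (pullback.map a q a₂ q g (𝟙 _) (𝟙 _) (by simp [← h₂]) (by simp))
      (pullback.map a₁ q a₃ q m (𝟙 _) (𝟙 _) (by simp [← h₃]) (by simp))
      (pullback.map a₂ q a₃ q w (𝟙 _) (𝟙 _) (by simp [← h₄]) (by simp)) := by
  have hcomm : pullback.map a q a₁ q f (𝟙 _) (𝟙 _) (by simp [← h₁]) (by simp) ≫
      pullback.map a₁ q a₃ q m (𝟙 _) (𝟙 _) (by simp [← h₃]) (by simp) =
      pullback.map a q a₂ q g (𝟙 _) (𝟙 _) (by simp [← h₂]) (by simp) ≫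
      pullback.map a₂ q a₃ q w (𝟙 _) (𝟙 _) (by simp [← h₄]) (by simp) := by
    apply pullback.hom_ext
    · simp [hq.w]
    · simp
  refine IsPullback.of_isLimit' ⟨hcomm⟩ ?_
  have hcond : ∀ s : PullbackCone
      (pullback.map a₁ q a₃ q m (𝟙 _) (𝟙 _) (by simp [← h₃]) (by simp))
      (pullback.map a₂ q a₃ q w (𝟙 _) (𝟙 _) (by simp [← h₄]) (by simp)),
      (s.fst ≫ pullback.fst a₁ q) ≫ m = (s.snd ≫ pullback.fst a₂ q) ≫ w := by
    intro s
    have h5 := s.condition =≫ pullback.fst a₃ q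
    simpa using h5
  have hsnd : ∀ s : PullbackCone
      (pullback.map a₁ q a₃ q m (𝟙 _) (𝟙 _) (by simp [← h₃]) (by simp))
      (pullback.map a₂ q a₃ q w (𝟙 _) (𝟙 _) (by simp [← h₄]) (by simp)),
      s.fst ≫ pullback.snd a₁ q = s.snd ≫ pullback.snd a₂ q := by
    intro s
    have h5 := s.condition =≫ pullback.snd a₃ q
    simpa using h5
  refine PullbackCone.IsLimit.mk _ (fun s => pullback.lift
      (hq.lift (s.fst ≫ pullback.fst a₁ q) (s.snd ≫ pullback.fst a₂ q) (hcond s))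
      (s.fst ≫ pullback.snd a₁ q) ?_) ?_ ?_ ?_
  · rw [← h₁, ← Category.assoc, IsPullback.lift_fst]
    simp only [Category.assoc, pullback.condition]
  · intro s
    apply pullback.hom_ext
    · simp
    · simp
  · intro s
    apply pullback.hom_ext
    · simp
    · have h5 := hsnd s
      simp only [Category.assoc, pullback.lift_snd]
      simp only [limit.lift_π, PullbackCone.mk_pt, PullbackCone.mk_π_app, Category.comp_id,
        Category.assoc] at h5 ⊢
      first
        | exact h5
        | exact h5.symm
        | simpa using h5
        | simpa using h5.symm
  · intro s m' hm₁ hm₂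
    apply pullback.hom_ext
    · simp only [pullback.lift_fst]
      refine hq.hom_ext ?_ ?_
      · have h5 := hm₁ =≫ pullback.fst a₁ q
        simp only [Category.assoc, IsPullback.lift_fst]
        simpa using h5
      · have h5 := hm₂ =≫ pullback.fst a₂ q
        simp only [Category.assoc, IsPullback.lift_snd]
        simpa using h5
    · have h5 := hm₁ =≫ pullback.snd a₁ q
      simp only [pullback.lift_snd]
      simpa using h5


open PrincipalBundles PrincipalBundles.InternalGroup

section MainS18
variable {C : Type u} [Category.{v} C] [HasFiniteLimits C] {Gr : InternalGroup C}
  {SG : GObject Gr ⥤ C} {X : C} {L : Over X ⥤ GObject Gr} {R : GObject Gr ⥤ Over X}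

/-- The chosen terminal object of `Over X`. -/
abbrev V₀ (X : C) : Over X := Over.mk (𝟙 X)

noncomputable def htV (X : C) : IsTerminal (V₀ X) := Over.mkIdTerminal

noncomputable def toV₀ {X : C} (W : Over X) : W ⟶ V₀ X := (htV X).from W

lemma toV₀_unique {X : C} {W : Over X} (u v : W ⟶ V₀ X) : u = v := (htV X).hom_ext u v

variable (SGadj : SG ⊣ trivAction Gr) (adj : L ⊣ R) (hover : L ⋙ SG = Over.forget X)

/-- The composite adjunction `Σ_X ⊣ (trivAction ⋙ R)`, obtained from `adj.comp SGadj`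
via `hover`. -/
noncomputable def cAdj : Over.forget X ⊣ trivAction Gr ⋙ R := hover ▸ adj.comp SGadj

/-- The unit of `cAdj` at the terminal object. -/
noncomputable def dmap : V₀ X ⟶ R.obj ((trivAction Gr).obj X) :=
  (cAdj SGadj adj hover).unit.app (V₀ X)

/-- The bundle projection `p : P ⟶ G* X`, where `P := L ⊤`. -/
noncomputable def pmap : L.obj (V₀ X) ⟶ (trivAction Gr).obj X :=
  L.map (dmap SGadj adj hover) ≫ adj.counit.app ((trivAction Gr).obj X)

/-- The Beck–Chevalley / Frobenius condition for `adj`, in pullback form. -/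
def Crit (A : GObject Gr) {Yl : GObject Gr} (y : Yl ⟶ A) {Wl : Over X}
    (w : Wl ⟶ R.obj A) : Prop :=
  ∀ (Q : Over X) (q₁ : Q ⟶ R.obj Yl) (q₂ : Q ⟶ Wl), IsPullback q₁ q₂ (R.map y) w →
    IsPullback (L.map q₁ ≫ adj.counit.app Yl) (L.map q₂) y (L.map w ≫ adj.counit.app A)

/- ### Unfolding the sliced adjunction -/

lemma sliced_counit_left (A : GObject Gr) (Y : Over A) :
    ((slicedAdj adj A).counit.app Y).left = adj.counit.app Y.left := by
  have h1 : ((slicedAdj adj A).homEquiv _ Y).symm (𝟙 ((slicedR adj A).obj Y))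
      = (slicedAdj adj A).counit.app Y := by
    rw [Adjunction.homEquiv_counit, CategoryTheory.Functor.map_id, Category.id_comp]
  rw [← h1]
  simp [slicedAdj, Adjunction.homEquiv_counit]
  exact (adj.homEquiv_counit _ _ _).trans (by erw [CategoryTheory.Functor.map_id, Category.id_comp])

lemma frob_left_fst (A : GObject Gr) (W : Over (R.obj A)) (Y : Over A) :
    (frobMap (slicedAdj adj A) W Y).left ≫ (prod.fst : Y ⨯ (slicedL adj A).obj W ⟶ Y).left =
      L.map ((prod.fst : (slicedR adj A).obj Y ⨯ W ⟶ (slicedR adj A).obj Y).left) ≫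
        adj.counit.app Y.left := by
  rw [← Over.comp_left]
  unfold frobMap
  rw [prod.lift_fst, Over.comp_left, sliced_counit_left]
  rfl

lemma frob_left_snd (A : GObject Gr) (W : Over (R.obj A)) (Y : Over A) :
    (frobMap (slicedAdj adj A) W Y).left ≫
        (prod.snd : Y ⨯ (slicedL adj A).obj W ⟶ (slicedL adj A).obj W).left =
      L.map ((prod.snd : (slicedR adj A).obj Y ⨯ W ⟶ W).left) := by
  rw [← Over.comp_left]
  unfold frobMap
  rw [prod.lift_snd]
  rfl

/-- From `IsFrobenius` of the sliced adjunction to the pullback-style criterion. -/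
lemma crit_of_isFrobenius {A : GObject Gr} (hA : IsFrobenius (slicedAdj adj A))
    {Yl : GObject Gr} (y : Yl ⟶ A) {Wl : Over X} (w : Wl ⟶ R.obj A) :
    Crit adj A y w := by
  intro Q q₁ q₂ hq
  set Y : Over A := Over.mk y with hY
  set W : Over (R.obj A) := Over.mk w with hW
  -- the source product, as a pullback over `R A`
  have hsrc : IsPullback ((prod.fst : (slicedR adj A).obj Y ⨯ W ⟶ _).left)
      ((prod.snd : (slicedR adj A).obj Y ⨯ W ⟶ _).left) (R.map y) w :=
    isPullback_over_prod ((slicedR adj A).obj Y) W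
  -- the target product, as a pullback over `A`
  have htgt : IsPullback ((prod.fst : Y ⨯ (slicedL adj A).obj W ⟶ _).left)
      ((prod.snd : Y ⨯ (slicedL adj A).obj W ⟶ _).left) y
      (L.map w ≫ adj.counit.app A) :=
    isPullback_over_prod Y ((slicedL adj A).obj W)
  have hiso : IsIso (frobMap (slicedAdj adj A) W Y) := hA W Y
  have hisoL : IsIso ((frobMap (slicedAdj adj A) W Y).left) := by
    have : IsIso ((Over.forget A).map (frobMap (slicedAdj adj A) W Y)) := inferInstance
    exact this
  -- the given square for the canonical pullback choice
  have hcrit0 : IsPullback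
      (L.map ((prod.fst : (slicedR adj A).obj Y ⨯ W ⟶ _).left) ≫ adj.counit.app Yl)
      (L.map ((prod.snd : (slicedR adj A).obj Y ⨯ W ⟶ _).left)) y
      (L.map w ≫ adj.counit.app A) := by
    have h0 := isPullback_of_iso_comp htgt ((frobMap (slicedAdj adj A) W Y).left)
    rw [frob_left_fst, frob_left_snd] at h0
    exact h0
  -- transport to the arbitrary pullback choice
  obtain ⟨c, hc₁, hc₂⟩ : {l : Q ⟶ ((slicedR adj A).obj Y ⨯ W).left //
      l ≫ (prod.fst : (slicedR adj A).obj Y ⨯ W ⟶ _).left = q₁ ∧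
        l ≫ (prod.snd : (slicedR adj A).obj Y ⨯ W ⟶ _).left = q₂} :=
    PullbackCone.IsLimit.lift' hsrc.isLimit q₁ q₂ hq.w
  have hc₁' : c ≫ (prod.fst : (slicedR adj A).obj Y ⨯ W ⟶ _).left = q₁ := hc₁
  have hc₂' : c ≫ (prod.snd : (slicedR adj A).obj Y ⨯ W ⟶ _).left = q₂ := hc₂
  have : IsIso c := isIso_of_isPullback_comparison hsrc hq c hc₁' hc₂'
  have h1 := isPullback_of_iso_comp hcrit0 (L.map c)
  erw [← Category.assoc, ← L.map_comp, hc₁', ← L.map_comp, hc₂'] at h1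
  exact h1

/-- From the pullback-style criterion back to `IsFrobenius`. -/
lemma isFrobenius_of_crit {A : GObject Gr}
    (h : ∀ {Yl : GObject Gr} (y : Yl ⟶ A) {Wl : Over X} (w : Wl ⟶ R.obj A), Crit adj A y w) :
    IsFrobenius (slicedAdj adj A) := by
  intro W Y
  have hsrc : IsPullback ((prod.fst : (slicedR adj A).obj Y ⨯ W ⟶ _).left)
      ((prod.snd : (slicedR adj A).obj Y ⨯ W ⟶ _).left) (R.map Y.hom) W.hom :=
    isPullback_over_prod ((slicedR adj A).obj Y) W
  have htgt : IsPullback ((prod.fst : Y ⨯ (slicedL adj A).obj W ⟶ _).left)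
      ((prod.snd : Y ⨯ (slicedL adj A).obj W ⟶ _).left) Y.hom
      (L.map W.hom ≫ adj.counit.app A) :=
    isPullback_over_prod Y ((slicedL adj A).obj W)
  have hcrit := h Y.hom W.hom _ _ _ hsrc
  have hisoL : IsIso ((frobMap (slicedAdj adj A) W Y).left) :=
    isIso_of_isPullback_comparison htgt hcrit _ (frob_left_fst adj A W Y)
      (frob_left_snd adj A W Y)
  haveI : IsIso ((Over.forget A).map (frobMap (slicedAdj adj A) W Y)) := hisoL
  exact isIso_of_reflects_iso (frobMap (slicedAdj adj A) W Y) (Over.forget A)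


include SGadj adj hover

/- ### The graph pullback -/

lemma graph_isPullback (W : Over X) :
    IsPullback ((cAdj SGadj adj hover).unit.app W) (toV₀ W)
      ((trivAction Gr ⋙ R).map W.hom) (dmap SGadj adj hover) := by
  have htl : (toV₀ W).left = W.hom := by simpa using Over.w (toV₀ W)
  have h2 : (Over.forget X ⋙ trivAction Gr ⋙ R).map (toV₀ W)
      = (trivAction Gr ⋙ R).map W.hom := by
    show (trivAction Gr ⋙ R).map ((toV₀ W).left) = _
    rw [htl]
  have hcomm : (cAdj SGadj adj hover).unit.app W ≫ (trivAction Gr ⋙ R).map W.hom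
      = toV₀ W ≫ dmap SGadj adj hover := by
    have h1 := (cAdj SGadj adj hover).unit.naturality (toV₀ W)
    simp only [Functor.id_map] at h1
    erw [← h2, ← h1]
    rfl
  refine IsPullback.of_isLimit' ⟨hcomm⟩ ?_
  have key : ∀ (T : Over X) (m : T ⟶ W), m ≫ (cAdj SGadj adj hover).unit.app W
      = (cAdj SGadj adj hover).homEquiv T W.left ((Over.forget X).map m) := by
    intro T m
    erw [Adjunction.homEquiv_unit]
    have hnat := (cAdj SGadj adj hover).unit.naturality m
    simp only [Functor.id_map] at hnat
    exact hnat
  refine PullbackCone.IsLimit.mk _ (fun s => ?lift) ?_ ?_ ?_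
  case lift =>
    refine Over.homMk (((cAdj SGadj adj hover).homEquiv s.pt W.left).symm s.fst) ?_
    have hfst := congrArg ((cAdj SGadj adj hover).homEquiv s.pt X).symm s.condition
    erw [Adjunction.homEquiv_naturality_right_symm, Adjunction.homEquiv_naturality_left_symm]
      at hfst
    have hd : ((cAdj SGadj adj hover).homEquiv (V₀ X) X).symm (dmap SGadj adj hover)
        = 𝟙 X := by
      erw [dmap, Adjunction.homEquiv_counit]
      exact (cAdj SGadj adj hover).left_triangle_components (V₀ X)
    rw [hd] at hfst
    have hsnd : (Over.forget X).map s.snd ≫ 𝟙 X = s.pt.hom := Over.w s.snd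
    rw [hsnd] at hfst
    exact hfst
  · intro s
    rw [key]
    show ((cAdj SGadj adj hover).homEquiv s.pt W.left)
      (((cAdj SGadj adj hover).homEquiv s.pt W.left).symm s.fst) = s.fst
    exact Equiv.apply_symm_apply _ _
  · intro s
    exact toV₀_unique _ _
  · intro s m hm₁ _
    have h5 : ((cAdj SGadj adj hover).homEquiv s.pt W.left) ((Over.forget X).map m)
        = s.fst := by
      rw [← key]; exact hm₁
    have h6 : (Over.forget X).map m
        = ((cAdj SGadj adj hover).homEquiv s.pt W.left).symm s.fst := by
      erw [← h5, Equiv.symm_apply_apply]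
    ext
    exact h6

/- ### The basic pullback square for `L` -/

lemma dagger_isPullback (h2 : IsFrobenius (slicedAdj adj ((trivAction Gr).obj X)))
    (W : Over X) :
    IsPullback
      (L.map ((cAdj SGadj adj hover).unit.app W) ≫
        adj.counit.app ((trivAction Gr).obj W.left))
      (L.map (toV₀ W)) ((trivAction Gr).map W.hom) (pmap SGadj adj hover) := by
  have hc := crit_of_isFrobenius adj h2 ((trivAction Gr).map W.hom) (dmap SGadj adj hover)
    _ ((cAdj SGadj adj hover).unit.app W) (toV₀ W) (graph_isPullback SGadj adj hover W)
  exact hc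

/-- The structure iso `ν : L W ≅ P ×_{G* X} G* W.left`. -/
noncomputable def nu (h2 : IsFrobenius (slicedAdj adj ((trivAction Gr).obj X)))
    (W : Over X) :
    L.obj W ≅ pullback ((trivAction Gr).map W.hom) (pmap SGadj adj hover) :=
  (dagger_isPullback SGadj adj hover h2 W).isoPullback

lemma nu_hom_fst (h2 : IsFrobenius (slicedAdj adj ((trivAction Gr).obj X))) (W : Over X) :
    (nu SGadj adj hover h2 W).hom ≫ pullback.fst _ _
      = L.map ((cAdj SGadj adj hover).unit.app W) ≫
          adj.counit.app ((trivAction Gr).obj W.left) :=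
  (dagger_isPullback SGadj adj hover h2 W).isoPullback_hom_fst

lemma nu_hom_snd (h2 : IsFrobenius (slicedAdj adj ((trivAction Gr).obj X))) (W : Over X) :
    (nu SGadj adj hover h2 W).hom ≫ pullback.snd _ _ = L.map (toV₀ W) :=
  (dagger_isPullback SGadj adj hover h2 W).isoPullback_hom_snd

lemma nu_natural (h2 : IsFrobenius (slicedAdj adj ((trivAction Gr).obj X)))
    {W W' : Over X} (u : W ⟶ W') :
    L.map u ≫ (nu SGadj adj hover h2 W').hom
      = (nu SGadj adj hover h2 W).hom ≫
          pullback.map _ _ _ _ ((trivAction Gr).map u.left) (𝟙 _) (𝟙 _)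
            (by rw [← Functor.map_comp, Over.w, Category.comp_id]) (by simp) := by
  apply pullback.hom_ext
  · rw [Category.assoc, Category.assoc, nu_hom_fst, pullback.lift_fst]
    conv_lhs => erw [← Category.assoc, ← L.map_comp]
    have h1 := (cAdj SGadj adj hover).unit.naturality u
    simp only [Functor.id_map] at h1
    rw [h1]
    have h3 : (Over.forget X ⋙ trivAction Gr ⋙ R).map u
        = R.map ((trivAction Gr).map u.left) := rfl
    erw [h3, L.map_comp, Category.assoc, adj.counit_naturality ((trivAction Gr).map u.left)]
    conv_rhs => erw [← Category.assoc, nu_hom_fst SGadj adj hover h2 W, Category.assoc]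
    rfl
  · rw [Category.assoc, Category.assoc, nu_hom_snd, pullback.lift_snd, ← Category.assoc,
      nu_hom_snd, Category.comp_id, ← L.map_comp]
    congr 1
    exact toV₀_unique _ _

/- ### `L` preserves pullbacks -/

lemma L_preserves_isPullback (h2 : IsFrobenius (slicedAdj adj ((trivAction Gr).obj X)))
    {Q A₁ A₂ A₃ : Over X} {q₁ : Q ⟶ A₁} {q₂ : Q ⟶ A₂} {mm : A₁ ⟶ A₃} {ww : A₂ ⟶ A₃}
    (hq : IsPullback q₁ q₂ mm ww) :
    IsPullback (L.map q₁) (L.map q₂) (L.map mm) (L.map ww) := by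
  haveI : PreservesLimitsOfSize.{0, 0} (trivAction Gr) :=
    Adjunction.rightAdjoint_preservesLimits SGadj
  have h0 : IsPullback q₁.left q₂.left mm.left ww.left := hq.map (Over.forget X)
  have h1 : IsPullback ((trivAction Gr).map q₁.left) ((trivAction Gr).map q₂.left)
      ((trivAction Gr).map mm.left) ((trivAction Gr).map ww.left) := h0.map (trivAction Gr)
  have e₁ : (trivAction Gr).map q₁.left ≫ (trivAction Gr).map A₁.hom
      = (trivAction Gr).map Q.hom := by rw [← Functor.map_comp, Over.w]
  have e₂ : (trivAction Gr).map q₂.left ≫ (trivAction Gr).map A₂.hom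
      = (trivAction Gr).map Q.hom := by rw [← Functor.map_comp, Over.w]
  have e₃ : (trivAction Gr).map mm.left ≫ (trivAction Gr).map A₃.hom
      = (trivAction Gr).map A₁.hom := by rw [← Functor.map_comp, Over.w]
  have e₄ : (trivAction Gr).map ww.left ≫ (trivAction Gr).map A₃.hom
      = (trivAction Gr).map A₂.hom := by rw [← Functor.map_comp, Over.w]
  have hphi := isPullback_map_pullback h1 e₁ e₂ e₃ e₄ (pmap SGadj adj hover)
  refine hphi.of_iso (nu SGadj adj hover h2 Q).symm (nu SGadj adj hover h2 A₁).symm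
    (nu SGadj adj hover h2 A₂).symm (nu SGadj adj hover h2 A₃).symm ?_ ?_ ?_ ?_
  · exact iso_square_inv _ _ (nu_natural SGadj adj hover h2 q₁)
  · exact iso_square_inv _ _ (nu_natural SGadj adj hover h2 q₂)
  · exact iso_square_inv _ _ (nu_natural SGadj adj hover h2 mm)
  · exact iso_square_inv _ _ (nu_natural SGadj adj hover h2 ww)

/- ### The Frobenius iso `χ : L R Y ≅ Y ⨯ P` -/

noncomputable def chi (Yl : GObject Gr) : L.obj (R.obj Yl) ⟶ Yl ⨯ L.obj (V₀ X) :=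
  prod.lift (adj.counit.app Yl) (L.map (toV₀ (R.obj Yl)))

lemma chi_isIso (h2 : IsFrobenius (slicedAdj adj ((trivAction Gr).obj X)))
    (Yl : GObject Gr) : IsIso (chi adj Yl) := by
  haveI : PreservesLimitsOfSize.{0, 0} R := Adjunction.rightAdjoint_preservesLimits adj
  set d : R.obj Yl ⟶ R.obj ((trivAction Gr).obj X)
    := toV₀ (R.obj Yl) ≫ dmap SGadj adj hover with hd
  have h0 : IsPullback (prod.lift (𝟙 (R.obj Yl)) d) (toV₀ (R.obj Yl))
      (prod.snd : R.obj Yl ⨯ R.obj ((trivAction Gr).obj X) ⟶ _)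
      (dmap SGadj adj hover) :=
    isPullback_lift_terminal (htV X) (dmap SGadj adj hover)
  set pc := prodComparison R Yl ((trivAction Gr).obj X) with hpc
  have h1 : IsPullback (prod.lift (𝟙 (R.obj Yl)) d ≫ inv pc) (toV₀ (R.obj Yl))
      (R.map (prod.snd : Yl ⨯ (trivAction Gr).obj X ⟶ _)) (dmap SGadj adj hover) := by
    refine h0.of_iso (Iso.refl _) (asIso pc).symm (Iso.refl _) (Iso.refl _) ?_ ?_ ?_ ?_
    · simp [pc]
    · simp
    · show prod.snd ≫ 𝟙 _ = inv pc ≫ R.map prod.snd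
      rw [Category.comp_id, IsIso.eq_inv_comp, hpc, prodComparison_snd]
    · simp
  have hc := crit_of_isFrobenius adj h2
    (prod.snd : Yl ⨯ (trivAction Gr).obj X ⟶ (trivAction Gr).obj X)
    (dmap SGadj adj hover) _ _ _ h1
  have hiso := isIso_lift_of_isPullback_prod_snd hc
  have hfst : (L.map (prod.lift (𝟙 (R.obj Yl)) d ≫ inv pc) ≫
      adj.counit.app (Yl ⨯ (trivAction Gr).obj X)) ≫ prod.fst = adj.counit.app Yl := by
    rw [Category.assoc, ← adj.counit_naturality (prod.fst : Yl ⨯ (trivAction Gr).obj X ⟶ Yl)]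
    rw [← Category.assoc, ← L.map_comp]
    have : (prod.lift (𝟙 (R.obj Yl)) d ≫ inv pc) ≫ R.map prod.fst = 𝟙 (R.obj Yl) := by
      rw [Category.assoc, ← prodComparison_fst, ← hpc, IsIso.inv_hom_id_assoc, prod.lift_fst]
    rw [this, CategoryTheory.Functor.map_id, Category.id_comp]
  have heq : prod.lift ((L.map (prod.lift (𝟙 (R.obj Yl)) d ≫ inv pc) ≫
        adj.counit.app (Yl ⨯ (trivAction Gr).obj X)) ≫ prod.fst)
      (L.map (toV₀ (R.obj Yl))) = chi adj Yl := by
    rw [hfst]; rfl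
  rw [heq] at hiso
  exact hiso

/- ### The counit is cartesian -/

lemma chi_natural {Yl Zl : GObject Gr} (f : Yl ⟶ Zl) :
    L.map (R.map f) ≫ chi adj Zl = chi adj Yl ≫ prod.map f (𝟙 (L.obj (V₀ X))) := by
  apply Limits.prod.hom_ext
  · rw [Category.assoc, Category.assoc, prod.map_fst, chi, chi, prod.lift_fst,
      prod.lift_fst_assoc]
    exact adj.counit_naturality f
  · rw [Category.assoc, Category.assoc, prod.map_snd, chi, chi, prod.lift_snd,
      prod.lift_snd_assoc, Category.comp_id, ← L.map_comp]
    congr 1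
    exact toV₀_unique _ _

lemma counit_cartesian_triv (h2 : IsFrobenius (slicedAdj adj ((trivAction Gr).obj X)))
    {Yl : GObject Gr} {Z : C} (hm : Yl ⟶ (trivAction Gr).obj Z) :
    IsPullback (adj.counit.app Yl) (L.map (R.map hm)) hm
      (adj.counit.app ((trivAction Gr).obj Z)) := by
  haveI hi1 := chi_isIso SGadj adj hover h2 Yl
  haveI hi2 := chi_isIso SGadj adj hover h2 ((trivAction Gr).obj Z)
  have h0 := isPullback_prod_fst (P := L.obj (V₀ X)) hm
  refine h0.of_iso (asIso (chi adj Yl)).symm (Iso.refl _)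
    (asIso (chi adj ((trivAction Gr).obj Z))).symm (Iso.refl _) ?_ ?_ ?_ ?_
  · show prod.fst ≫ 𝟙 _ = inv (chi adj Yl) ≫ adj.counit.app Yl
    rw [Category.comp_id, IsIso.eq_inv_comp, chi, prod.lift_fst]
  · show prod.map hm (𝟙 _) ≫ inv (chi adj ((trivAction Gr).obj Z))
      = inv (chi adj Yl) ≫ L.map (R.map hm)
    have := iso_square_inv (asIso (chi adj Yl)) (asIso (chi adj ((trivAction Gr).obj Z)))
      (chi_natural SGadj adj hover hm)
    simpa using this
  · simp
  · show prod.fst ≫ 𝟙 _ = inv (chi adj ((trivAction Gr).obj Z)) ≫ adj.counit.app _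
    rw [Category.comp_id, IsIso.eq_inv_comp, chi, prod.lift_fst]

lemma counit_cartesian (h2 : IsFrobenius (slicedAdj adj ((trivAction Gr).obj X)))
    {Yl A : GObject Gr} (y : Yl ⟶ A) :
    IsPullback (adj.counit.app Yl) (L.map (R.map y)) y (adj.counit.app A) := by
  have hbot := counit_cartesian_triv SGadj adj hover h2 (SGadj.unit.app A)
  have hbig := counit_cartesian_triv SGadj adj hover h2 (y ≫ SGadj.unit.app A)
  rw [R.map_comp, L.map_comp] at hbig
  exact IsPullback.of_bot hbig (adj.counit_naturality y).symm hbot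

/- ### Assembly -/

lemma crit_all (h2 : IsFrobenius (slicedAdj adj ((trivAction Gr).obj X)))
    (A : GObject Gr) {Yl : GObject Gr} (y : Yl ⟶ A) {Wl : Over X} (w : Wl ⟶ R.obj A) :
    Crit adj A y w := by
  intro Q q₁ q₂ hq
  have hb := L_preserves_isPullback SGadj adj hover h2 hq
  have ha := counit_cartesian SGadj adj hover h2 y
  exact hb.paste_horiz ha

lemma stablyFrobenius_of_frob_at_X
    (h2 : IsFrobenius (slicedAdj adj ((trivAction Gr).obj X))) :
    IsStablyFrobenius adj := fun A =>
  isFrobenius_of_crit adj (fun {Yl} y {Wl} w => crit_all SGadj adj hover h2 A y w)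



end MainS18
end S18

/-- Suppose `Σ_G ⊣ G*` is stably Frobenius and `L ⊣ R : C/X ⇄ [G, C]` is an
adjunction over `C`.  Then the following are equivalent: (1) `L ⊣ R` is stably Frobenius;
(2) the sliced adjunction at `G* X` satisfies Frobenius reciprocity; (3) the sliced adjunction
at `G* Z` satisfies Frobenius reciprocity for every object `Z` of `C`. -/
theorem statement18 {C : Type u} [Category.{v} C] [HasFiniteLimits C] (Gr : InternalGroup C)
    (SG : GObject Gr ⥤ C) (SGadj : SG ⊣ trivAction Gr) (hSG : IsStablyFrobenius SGadj)
    (X : C) (L : Over X ⥤ GObject Gr) (R : GObject Gr ⥤ Over X) (adj : L ⊣ R)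
    (hover : L ⋙ SG = Over.forget X) :
    (IsStablyFrobenius adj ↔ IsFrobenius (slicedAdj adj ((trivAction Gr).obj X))) ∧
    (IsStablyFrobenius adj ↔ ∀ Z : C, IsFrobenius (slicedAdj adj ((trivAction Gr).obj Z))) := by
  have key : IsFrobenius (slicedAdj adj ((trivAction Gr).obj X)) → IsStablyFrobenius adj :=
    fun h => S18.stablyFrobenius_of_frob_at_X SGadj adj hover h
  exact ⟨⟨fun h => h _, key⟩, ⟨fun h Z => h _, fun h => key (h X)⟩⟩
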